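/- Unbiasedness of the bias-corrected Janon-type estimator: let X_i = f(x_i) and Y_i = f(y_i), i = 1,...,n (n ≥ 2), be i.i.d. pairs of square-integrable real random variables with E[X_i] = E[Y_i] = μ, Var(X_i) = Var(Y_i) = σ², and Cov(X_i, Y_i) = τ̲². Define μ̂ = (1/n)Σ X_i, μ̂' = (1/n)Σ Y_i, s² = (1/(n−1))Σ(X_i − μ̂)², s'² = (1/(n−1))Σ(Y_i − μ̂')². Then E[ (2n/(2n−1)) ( (1/n)Σ X_i Y_i − ((μ̂+μ̂')/2)² + (s² + s'²)/(4n) ) ] = τ̲². -/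

import Mathlib

open MeasureTheory ProbabilityTheory

lemma bcj_integrable_mul {Ω : Type*} [MeasurableSpace Ω] {P : Measure Ω}
    {f g : Ω → ℝ} (hf : MemLp f 2 P) (hg : MemLp g 2 P) :
    Integrable (fun ω => f ω * g ω) P := by
  refine Integrable.mono' ((hf.integrable_sq.add hg.integrable_sq).const_mul (1/2))
    (hf.aestronglyMeasurable.mul hg.aestronglyMeasurable) ?_
  filter_upwards with ω
  rw [Real.norm_eq_abs, abs_mul]
  simp only [Pi.add_apply]
  nlinarith [sq_nonneg (|f ω| - |g ω|), sq_abs (f ω), sq_abs (g ω),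
    abs_nonneg (f ω), abs_nonneg (g ω)]

lemma bcj_integral_mul_of_cov {Ω : Type*} [MeasurableSpace Ω] (P : Measure Ω)
    [IsProbabilityMeasure P] {f g : Ω → ℝ} {μm c : ℝ}
    (hf : MemLp f 2 P) (hg : MemLp g 2 P)
    (hmf : ∫ ω, f ω ∂P = μm) (hmg : ∫ ω, g ω ∂P = μm)
    (hc : ∫ ω, (f ω - μm) * (g ω - μm) ∂P = c) :
    ∫ ω, f ω * g ω ∂P = c + μm * μm := by
  have hff : Integrable f P := hf.integrable one_le_two
  have hgg : Integrable g P := hg.integrable one_le_two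
  have hmul : Integrable (fun ω => f ω * g ω) P := bcj_integrable_mul hf hg
  have e : (fun ω => (f ω - μm) * (g ω - μm))
      = fun ω => f ω * g ω - μm * f ω - μm * g ω + μm * μm := by
    funext ω; ring
  rw [e] at hc
  have h1 : Integrable (fun ω => f ω * g ω - μm * f ω) P := hmul.sub (hff.const_mul μm)
  have h2 : Integrable (fun ω => f ω * g ω - μm * f ω - μm * g ω) P :=
    h1.sub (hgg.const_mul μm)
  rw [integral_add h2 (integrable_const _),
    integral_sub h1 (hgg.const_mul μm),
    integral_sub hmul (hff.const_mul μm),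
    integral_const_mul, integral_const_mul, integral_const, hmf, hmg] at hc
  simp only [measure_univ, probReal_univ, ENNReal.toReal_one, smul_eq_mul, one_mul] at hc
  linarith

lemma bcj_sum_ite_diag {n : ℕ} (i : Fin n) (a b : ℝ) :
    ∑ j : Fin n, (if j = i then a else b) = a + ((n : ℝ) - 1) * b := by
  have h : ∀ j : Fin n, (if j = i then a else b) = b + (if j = i then a - b else 0) := by
    intro j; by_cases h : j = i <;> simp [h]
  simp_rw [h]
  rw [Finset.sum_add_distrib, Finset.sum_const, Finset.sum_ite_eq' Finset.univ i,
    if_pos (Finset.mem_univ i)]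
  simp [Finset.card_univ, nsmul_eq_mul]
  ring

lemma bcj_sum_sum {Ω : Type*} [MeasurableSpace Ω] {P : Measure Ω} {n : ℕ}
    (U V : Fin n → Ω → ℝ) (hint : ∀ i j, Integrable (fun ω => U i ω * V j ω) P)
    (a b : ℝ) (hdiag : ∀ i, ∫ ω, U i ω * V i ω ∂P = a)
    (hoff : ∀ i j, i ≠ j → ∫ ω, U i ω * V j ω ∂P = b) :
    ∫ ω, (∑ i, U i ω) * (∑ j, V j ω) ∂P = (n : ℝ) * (a + ((n : ℝ) - 1) * b) := by
  simp_rw [Finset.sum_mul_sum]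
  rw [integral_finset_sum _ (fun i _ => integrable_finset_sum _ (fun j _ => hint i j))]
  have h1 : ∀ i : Fin n, ∫ ω, ∑ j, U i ω * V j ω ∂P = a + ((n : ℝ) - 1) * b := by
    intro i
    rw [integral_finset_sum _ (fun j _ => hint i j)]
    have h2 : ∀ j : Fin n, ∫ ω, U i ω * V j ω ∂P = if j = i then a else b := by
      intro j; by_cases h : j = i
      · subst h; rw [if_pos rfl]; exact hdiag j
      · rw [if_neg h]; exact hoff i j (fun hh => h hh.symm)
    simp_rw [h2]
    exact bcj_sum_ite_diag i a b
  simp_rw [h1]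
  rw [Finset.sum_const, Finset.card_univ, Fintype.card_fin, nsmul_eq_mul]

lemma bcj_sum_sq_sub {n : ℕ} (hn : (n : ℝ) ≠ 0) (Z : Fin n → ℝ) :
    ∑ i, (Z i - (1 / (n : ℝ)) * ∑ k, Z k) ^ 2
      = (∑ i, Z i * Z i) - (1 / (n : ℝ)) * ((∑ i, Z i) * (∑ i, Z i)) := by
  have h : ∀ i : Fin n, (Z i - (1 / (n : ℝ)) * ∑ k, Z k) ^ 2
      = Z i * Z i - (2 / (n : ℝ)) * ((∑ k, Z k) * Z i)
        + (1 / (n : ℝ)) ^ 2 * ((∑ k, Z k) * (∑ k, Z k)) := by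
    intro i; ring
  simp_rw [h]
  rw [Finset.sum_add_distrib, Finset.sum_sub_distrib, ← Finset.mul_sum, ← Finset.mul_sum,
    Finset.sum_const, Finset.card_univ, Fintype.card_fin, nsmul_eq_mul]
  field_simp
  ring

set_option maxHeartbeats 2000000 in
/-- Unbiasedness of the bias-corrected Janon-type estimator of `τ̲² = Cov(Xᵢ, Yᵢ)`. -/
theorem bias_corrected_janon_unbiased {Ω : Type*} [MeasurableSpace Ω]
    (P : Measure Ω) [IsProbabilityMeasure P] {n : ℕ} (hn : 2 ≤ n)
    (X Y : Fin n → Ω → ℝ) (μm σ2 τ2 : ℝ)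
    (hXm : ∀ i, Measurable (X i)) (hYm : ∀ i, Measurable (Y i))
    (hXL2 : ∀ i, MemLp (X i) 2 P) (hYL2 : ∀ i, MemLp (Y i) 2 P)
    (hindep : iIndepFun
      (fun i ω => (X i ω, Y i ω)) P)
    (hident : ∀ i j : Fin n,
      IdentDistrib (fun ω => (X i ω, Y i ω)) (fun ω => (X j ω, Y j ω)) P P)
    (hmeanX : ∀ i, ∫ ω, X i ω ∂P = μm) (hmeanY : ∀ i, ∫ ω, Y i ω ∂P = μm)
    (hvarX : ∀ i, ∫ ω, (X i ω - μm) ^ 2 ∂P = σ2)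
    (hvarY : ∀ i, ∫ ω, (Y i ω - μm) ^ 2 ∂P = σ2)
    (hcov : ∀ i, ∫ ω, (X i ω - μm) * (Y i ω - μm) ∂P = τ2) :
    ∫ ω,
        (2 * (n : ℝ) / (2 * (n : ℝ) - 1)) *
          ((1 / (n : ℝ)) * ∑ i, X i ω * Y i ω
            - (((1 / (n : ℝ)) * ∑ i, X i ω + (1 / (n : ℝ)) * ∑ i, Y i ω) / 2) ^ 2
            + ((1 / ((n : ℝ) - 1)) * ∑ i, (X i ω - (1 / (n : ℝ)) * ∑ k, X k ω) ^ 2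
                + (1 / ((n : ℝ) - 1)) * ∑ i, (Y i ω - (1 / (n : ℝ)) * ∑ k, Y k ω) ^ 2)
              / (4 * (n : ℝ))) ∂P
      = τ2 := by
  have hn2 : (2 : ℝ) ≤ (n : ℝ) := by exact_mod_cast hn
  have hn0 : (n : ℝ) ≠ 0 := by linarith
  have hn1 : (n : ℝ) - 1 ≠ 0 := by intro h; nlinarith
  have h2n : 2 * (n : ℝ) - 1 ≠ 0 := by intro h; nlinarith
  -- integrability of products
  have hmulXY : ∀ i j, Integrable (fun ω => X i ω * Y j ω) P :=
    fun i j => bcj_integrable_mul (hXL2 i) (hYL2 j)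
  have hmulXX : ∀ i j, Integrable (fun ω => X i ω * X j ω) P :=
    fun i j => bcj_integrable_mul (hXL2 i) (hXL2 j)
  have hmulYY : ∀ i j, Integrable (fun ω => Y i ω * Y j ω) P :=
    fun i j => bcj_integrable_mul (hYL2 i) (hYL2 j)
  -- same-index second moments
  have hIXY : ∀ i, ∫ ω, X i ω * Y i ω ∂P = τ2 + μm * μm := fun i =>
    bcj_integral_mul_of_cov P (hXL2 i) (hYL2 i) (hmeanX i) (hmeanY i) (hcov i)
  have hIXX : ∀ i, ∫ ω, X i ω * X i ω ∂P = σ2 + μm * μm := fun i =>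
    bcj_integral_mul_of_cov P (hXL2 i) (hXL2 i) (hmeanX i) (hmeanX i)
      (by simpa only [pow_two] using hvarX i)
  have hIYY : ∀ i, ∫ ω, Y i ω * Y i ω ∂P = σ2 + μm * μm := fun i =>
    bcj_integral_mul_of_cov P (hYL2 i) (hYL2 i) (hmeanY i) (hmeanY i)
      (by simpa only [pow_two] using hvarY i)
  -- cross-index second moments via independence
  have hIXXc : ∀ i j, i ≠ j → ∫ ω, X i ω * X j ω ∂P = μm * μm := by
    intro i j h
    have hi : IndepFun (X i) (X j) P :=
      (hindep.indepFun h).comp measurable_fst measurable_fst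
    rw [hi.integral_fun_mul_eq_mul_integral (hXm i).aestronglyMeasurable (hXm j).aestronglyMeasurable,
      hmeanX i, hmeanX j]
  have hIYYc : ∀ i j, i ≠ j → ∫ ω, Y i ω * Y j ω ∂P = μm * μm := by
    intro i j h
    have hi : IndepFun (Y i) (Y j) P :=
      (hindep.indepFun h).comp measurable_snd measurable_snd
    rw [hi.integral_fun_mul_eq_mul_integral (hYm i).aestronglyMeasurable (hYm j).aestronglyMeasurable,
      hmeanY i, hmeanY j]
  have hIXYc : ∀ i j, i ≠ j → ∫ ω, X i ω * Y j ω ∂P = μm * μm := by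
    intro i j h
    have hi : IndepFun (X i) (Y j) P :=
      (hindep.indepFun h).comp measurable_fst measurable_snd
    rw [hi.integral_fun_mul_eq_mul_integral (hXm i).aestronglyMeasurable (hYm j).aestronglyMeasurable,
      hmeanX i, hmeanY j]
  -- ℒ² membership of the sums
  have hSX : MemLp (fun ω => ∑ i, X i ω) 2 P :=
    memLp_finset_sum Finset.univ (fun i _ => hXL2 i)
  have hSY : MemLp (fun ω => ∑ i, Y i ω) 2 P :=
    memLp_finset_sum Finset.univ (fun i _ => hYL2 i)
  -- the six basic integrals
  have Ip1 : ∫ ω, ∑ i, X i ω * Y i ω ∂P = (n : ℝ) * (τ2 + μm * μm) := by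
    rw [integral_finset_sum _ (fun i _ => hmulXY i i)]
    simp_rw [hIXY]
    rw [Finset.sum_const, Finset.card_univ, Fintype.card_fin, nsmul_eq_mul]
  have Ip2 : ∫ ω, ∑ i, X i ω * X i ω ∂P = (n : ℝ) * (σ2 + μm * μm) := by
    rw [integral_finset_sum _ (fun i _ => hmulXX i i)]
    simp_rw [hIXX]
    rw [Finset.sum_const, Finset.card_univ, Fintype.card_fin, nsmul_eq_mul]
  have Ip3 : ∫ ω, ∑ i, Y i ω * Y i ω ∂P = (n : ℝ) * (σ2 + μm * μm) := by
    rw [integral_finset_sum _ (fun i _ => hmulYY i i)]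
    simp_rw [hIYY]
    rw [Finset.sum_const, Finset.card_univ, Fintype.card_fin, nsmul_eq_mul]
  have Ip4 : ∫ ω, (∑ i, X i ω) * (∑ i, X i ω) ∂P
      = (n : ℝ) * ((σ2 + μm * μm) + ((n : ℝ) - 1) * (μm * μm)) :=
    bcj_sum_sum X X hmulXX _ _ hIXX hIXXc
  have Ip5 : ∫ ω, (∑ i, Y i ω) * (∑ i, Y i ω) ∂P
      = (n : ℝ) * ((σ2 + μm * μm) + ((n : ℝ) - 1) * (μm * μm)) :=
    bcj_sum_sum Y Y hmulYY _ _ hIYY hIYYc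
  have Ip6 : ∫ ω, (∑ i, X i ω) * (∑ i, Y i ω) ∂P
      = (n : ℝ) * ((τ2 + μm * μm) + ((n : ℝ) - 1) * (μm * μm)) :=
    bcj_sum_sum X Y hmulXY _ _ hIXY hIXYc
  -- pointwise rewriting of the estimator
  set d1 : ℝ := 2 / (2 * (n : ℝ) - 1) with hd1
  set d2 : ℝ := 1 / (2 * (2 * (n : ℝ) - 1) * ((n : ℝ) - 1)) with hd2
  set d6 : ℝ := -(1 / ((n : ℝ) * (2 * (n : ℝ) - 1))) with hd6
  have key : ∀ ω,
      (2 * (n : ℝ) / (2 * (n : ℝ) - 1)) *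
          ((1 / (n : ℝ)) * ∑ i, X i ω * Y i ω
            - (((1 / (n : ℝ)) * ∑ i, X i ω + (1 / (n : ℝ)) * ∑ i, Y i ω) / 2) ^ 2
            + ((1 / ((n : ℝ) - 1)) * ∑ i, (X i ω - (1 / (n : ℝ)) * ∑ k, X k ω) ^ 2
                + (1 / ((n : ℝ) - 1)) * ∑ i, (Y i ω - (1 / (n : ℝ)) * ∑ k, Y k ω) ^ 2)
              / (4 * (n : ℝ)))
        = d1 * (∑ i, X i ω * Y i ω)
          + (d2 * (∑ i, X i ω * X i ω)
          + (d2 * (∑ i, Y i ω * Y i ω)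
          + ((-d2) * ((∑ i, X i ω) * (∑ i, X i ω))
          + ((-d2) * ((∑ i, Y i ω) * (∑ i, Y i ω))
          + d6 * ((∑ i, X i ω) * (∑ i, Y i ω)))))) := by
    intro ω
    rw [bcj_sum_sq_sub hn0 (fun i => X i ω), bcj_sum_sq_sub hn0 (fun i => Y i ω), hd1, hd2, hd6]
    field_simp
    ring
  rw [integral_congr_ae (Filter.Eventually.of_forall key)]
  -- integrability of the six pieces
  have hP1 : Integrable (fun ω => ∑ i, X i ω * Y i ω) P :=
    integrable_finset_sum _ (fun i _ => hmulXY i i)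
  have hP2 : Integrable (fun ω => ∑ i, X i ω * X i ω) P :=
    integrable_finset_sum _ (fun i _ => hmulXX i i)
  have hP3 : Integrable (fun ω => ∑ i, Y i ω * Y i ω) P :=
    integrable_finset_sum _ (fun i _ => hmulYY i i)
  have hP4 : Integrable (fun ω => (∑ i, X i ω) * (∑ i, X i ω)) P :=
    bcj_integrable_mul hSX hSX
  have hP5 : Integrable (fun ω => (∑ i, Y i ω) * (∑ i, Y i ω)) P :=
    bcj_integrable_mul hSY hSY
  have hP6 : Integrable (fun ω => (∑ i, X i ω) * (∑ i, Y i ω)) P :=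
    bcj_integrable_mul hSX hSY
  have h6 : Integrable (fun ω => d6 * ((∑ i, X i ω) * (∑ i, Y i ω))) P := hP6.const_mul _
  have h5 : Integrable (fun ω => (-d2) * ((∑ i, Y i ω) * (∑ i, Y i ω))) P := hP5.const_mul _
  have h4 : Integrable (fun ω => (-d2) * ((∑ i, X i ω) * (∑ i, X i ω))) P := hP4.const_mul _
  have h3 : Integrable (fun ω => d2 * (∑ i, Y i ω * Y i ω)) P := hP3.const_mul _
  have h2 : Integrable (fun ω => d2 * (∑ i, X i ω * X i ω)) P := hP2.const_mul _
  have h1 : Integrable (fun ω => d1 * (∑ i, X i ω * Y i ω)) P := hP1.const_mul _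
  have g5 : Integrable (fun ω => (-d2) * ((∑ i, Y i ω) * (∑ i, Y i ω))
      + d6 * ((∑ i, X i ω) * (∑ i, Y i ω))) P := h5.add h6
  have g4 : Integrable (fun ω => (-d2) * ((∑ i, X i ω) * (∑ i, X i ω))
      + ((-d2) * ((∑ i, Y i ω) * (∑ i, Y i ω))
      + d6 * ((∑ i, X i ω) * (∑ i, Y i ω)))) P := h4.add g5
  have g3 : Integrable (fun ω => d2 * (∑ i, Y i ω * Y i ω)
      + ((-d2) * ((∑ i, X i ω) * (∑ i, X i ω))
      + ((-d2) * ((∑ i, Y i ω) * (∑ i, Y i ω))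
      + d6 * ((∑ i, X i ω) * (∑ i, Y i ω))))) P := h3.add g4
  have g2 : Integrable (fun ω => d2 * (∑ i, X i ω * X i ω)
      + (d2 * (∑ i, Y i ω * Y i ω)
      + ((-d2) * ((∑ i, X i ω) * (∑ i, X i ω))
      + ((-d2) * ((∑ i, Y i ω) * (∑ i, Y i ω))
      + d6 * ((∑ i, X i ω) * (∑ i, Y i ω)))))) P := h2.add g3
  rw [integral_add h1 g2,
    integral_add h2 g3,
    integral_add h3 g4,
    integral_add h4 g5,
    integral_add h5 h6,
    integral_const_mul, integral_const_mul, integral_const_mul, integral_const_mul,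
    integral_const_mul, integral_const_mul,
    Ip1, Ip2, Ip3, Ip4, Ip5, Ip6, hd1, hd2, hd6]
  field_simp
  ring
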